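/- Let G = (V,E) be a finite bi-directed graph, A ⊆ V, and let C be a nonempty connected set with spo(C) ∩ (A∖C) = ∅. Then the formal partial derivative of the polynomial p_A^V with respect to the variable q_C satisfies ∂p_A^V/∂q_C = (−1)^{|C∖A|} · p_{A∖C}^{V∖spo(C)}, where p_A^W denotes, for A ⊆ W ⊆ V, the polynomial p_A^W(q) = Σ_{B : A ⊆ B ⊆ W} (−1)^{|B∖A|} ∏_{C* ∈ [B]_G} q_{C*} in the variables (q_C : ∅ ≠ C ⊆ V connected in G). Moreover, if spo(C) ∩ (A∖C) ≠ ∅ then ∂p_A^V/∂q_C = 0. -/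

import Mathlib

open Finset

namespace BMMI

variable {V : Type*} [Fintype V] [DecidableEq V]

/-- `Pr p A a` is the probability of the event `X_A = a|_A` under `p`. -/
def Pr (p : (V → Bool) → ℝ) (A : Finset V) (a : V → Bool) : ℝ :=
  ∑ i ∈ Finset.univ.filter (fun i : V → Bool => ∀ v ∈ A, i v = a v), p i

/-- `p` is a binary distribution on `V`. -/
def IsDist (p : (V → Bool) → ℝ) : Prop :=
  (∀ i, 0 ≤ p i) ∧ ∑ i : V → Bool, p i = 1

/-- `Pr2 p S T a b` is the probability of the joint event `X_S = a|_S, X_T = b|_T`. -/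
def Pr2 (p : (V → Bool) → ℝ) (S T : Finset V) (a b : V → Bool) : ℝ :=
  ∑ i ∈ Finset.univ.filter
      (fun i : V → Bool => (∀ v ∈ S, i v = a v) ∧ (∀ v ∈ T, i v = b v)), p i

/-- `X_S` and `X_T` are independent under `p`. -/
def Indep (p : (V → Bool) → ℝ) (S T : Finset V) : Prop :=
  ∀ a b : V → Bool, Pr2 p S T a b = Pr p S a * Pr p T b

/-- `spo G A` consists of `A` together with all vertices adjacent to a vertex of `A`. -/
def spo (G : SimpleGraph V) [DecidableRel G.Adj] (A : Finset V) : Finset V :=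
  Finset.univ.filter (fun w => w ∈ A ∨ ∃ v ∈ A, G.Adj v w)

/-- `C` is connected in `G`: every pair of vertices of `C` is joined by a walk
all of whose vertices lie in `C`. -/
def Conn (G : SimpleGraph V) (C : Finset V) : Prop :=
  ∀ v ∈ C, ∀ w ∈ C, ∃ W : G.Walk v w, ∀ x ∈ W.support, x ∈ C

/-- The connected set Markov property for the bi-directed graph `G`. -/
def CSMP (G : SimpleGraph V) [DecidableRel G.Adj] (p : (V → Bool) → ℝ) : Prop :=
  ∀ C : Finset V, C.Nonempty → Conn G C → Indep p C (Finset.univ \ spo G C)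

/-- `C` is an inclusion-maximal connected subset of `D` (a connected component of the
induced subgraph on `D`). -/
def IsMaxConnComp (G : SimpleGraph V) (D C : Finset V) : Prop :=
  C ⊆ D ∧ C.Nonempty ∧ Conn G C ∧
    ∀ C' : Finset V, C ⊆ C' → C' ⊆ D → Conn G C' → C' = C

/-- The Möbius parameter `q_A(p) = P(X_A = 0)`. -/
def qM (p : (V → Bool) → ℝ) (A : Finset V) : ℝ := Pr p A (fun _ => false)

open Classical in
/-- `[B]_G`: the finset of inclusion-maximal connected subsets of `B`. -/
noncomputable def maxConnComps (G : SimpleGraph V) (B : Finset V) :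
    Finset (Finset V) :=
  B.powerset.filter (fun C => IsMaxConnComp G B C)

/-- The polynomial `p_A^W(q) = Σ_{A ⊆ B ⊆ W} (−1)^{|B∖A|} ∏_{C ∈ [B]_G} q_C`
in the variables `q`. -/
noncomputable def pPoly (G : SimpleGraph V) (A W : Finset V)
    (q : Finset V → ℝ) : ℝ :=
  ∑ B ∈ Finset.univ.filter (fun B : Finset V => A ⊆ B ∧ B ⊆ W),
    (-1 : ℝ) ^ (B \ A).card * ∏ C ∈ maxConnComps G B, q C

section Aux

variable {V : Type*} [Fintype V] [DecidableEq V] {G : SimpleGraph V} [DecidableRel G.Adj]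

lemma mem_spo {x : V} {A : Finset V} : x ∈ spo G A ↔ x ∈ A ∨ ∃ v ∈ A, G.Adj v x := by
  simp [spo]

lemma subset_spo {A : Finset V} : A ⊆ spo G A := fun x hx => mem_spo.2 (Or.inl hx)

lemma mem_mcc {B D : Finset V} : D ∈ maxConnComps G B ↔ IsMaxConnComp G B D := by
  classical
  simp only [maxConnComps, Finset.mem_filter, Finset.mem_powerset]
  exact ⟨And.right, fun h => ⟨h.1, h⟩⟩

/-- If every vertex of `S` has a walk inside `S` to an anchor `u ∈ S`, then `S` is connected. -/
lemma conn_of_anchor {S : Finset V} {u : V}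
    (h : ∀ v ∈ S, ∃ W : G.Walk v u, ∀ x ∈ W.support, x ∈ S) : Conn G S := by
  intro v hv w hw
  obtain ⟨Wv, hWv⟩ := h v hv
  obtain ⟨Ww, hWw⟩ := h w hw
  refine ⟨Wv.append Ww.reverse, fun x hx => ?_⟩
  rw [SimpleGraph.Walk.mem_support_append_iff] at hx
  rcases hx with hx | hx
  · exact hWv x hx
  · rw [SimpleGraph.Walk.support_reverse, List.mem_reverse] at hx
    exact hWw x hx

lemma conn_union {D E : Finset V} (hD : Conn G D) (hE : Conn G E)
    (h : (D ∩ E).Nonempty) : Conn G (D ∪ E) := by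
  obtain ⟨u, hu⟩ := h
  rw [Finset.mem_inter] at hu
  refine conn_of_anchor (u := u) fun v hv => ?_
  rcases Finset.mem_union.1 hv with hv | hv
  · obtain ⟨W, hW⟩ := hD v hv u hu.1
    exact ⟨W, fun x hx => Finset.mem_union.2 (Or.inl (hW x hx))⟩
  · obtain ⟨W, hW⟩ := hE v hv u hu.2
    exact ⟨W, fun x hx => Finset.mem_union.2 (Or.inr (hW x hx))⟩

lemma conn_insert {C : Finset V} {u x : V} (hconn : Conn G C) (hu : u ∈ C)
    (hadj : G.Adj u x) : Conn G (insert x C) := by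
  refine conn_of_anchor (u := u) fun v hv => ?_
  rcases Finset.mem_insert.1 hv with rfl | hv
  · refine ⟨SimpleGraph.Walk.cons hadj.symm SimpleGraph.Walk.nil, fun y hy => ?_⟩
    simp only [SimpleGraph.Walk.support_cons, SimpleGraph.Walk.support_nil,
      List.mem_cons, List.mem_singleton] at hy
    rcases hy with rfl | rfl | h
    · exact Finset.mem_insert_self _ _
    · exact Finset.mem_insert_of_mem hu
    · exact absurd h List.not_mem_nil
  · obtain ⟨W, hW⟩ := hconn v hv u hu
    exact ⟨W, fun y hy => Finset.mem_insert_of_mem (hW y hy)⟩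

/-- A walk from outside `C` to inside `C` contains a crossing edge. -/
lemma cross {C : Finset V} : ∀ {x v : V}, (W : G.Walk x v) → x ∉ C → v ∈ C →
    ∃ u w, u ∈ W.support ∧ u ∉ C ∧ w ∈ C ∧ G.Adj u w := by
  intro x v W
  induction W with
  | nil => exact fun hx hv => absurd hv hx
  | @cons a b c h p ih =>
    intro hx hv
    by_cases hb : b ∈ C
    · exact ⟨a, b, SimpleGraph.Walk.start_mem_support _, hx, hb, h⟩
    · obtain ⟨u, w, hu, h1, h2, h3⟩ := ih hb hv
      exact ⟨u, w, by simp [SimpleGraph.Walk.support_cons, hu], h1, h2, h3⟩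

/-- Characterization of `C` being a maximal connected component of `B`. -/
lemma mcc_char {B C : Finset V} (hC : C.Nonempty) (hconn : Conn G C) :
    C ∈ maxConnComps G B ↔ C ⊆ B ∧ ∀ x ∈ B, x ∉ C → x ∉ spo G C := by
  rw [mem_mcc]
  constructor
  · rintro ⟨hCB, -, -, hmax⟩
    refine ⟨hCB, fun x hxB hxC hxs => ?_⟩
    rcases mem_spo.1 hxs with h | ⟨v, hv, hadj⟩
    · exact hxC h
    · have := hmax (insert x C) (Finset.subset_insert _ _)
        (Finset.insert_subset hxB hCB) (conn_insert hconn hv hadj)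
      exact hxC (this ▸ Finset.mem_insert_self x C)
  · rintro ⟨hCB, hbound⟩
    refine ⟨hCB, hC, hconn, fun C' hCC' hC'B hC'conn => ?_⟩
    refine Finset.Subset.antisymm (fun x hx => ?_) hCC'
    by_contra hxC
    obtain ⟨v, hv⟩ := hC
    obtain ⟨W, hW⟩ := hC'conn x hx v (hCC' hv)
    obtain ⟨u, w, hu, h1, h2, h3⟩ := cross W hxC hv
    exact hbound u (hC'B (hW u hu)) h1 (mem_spo.2 (Or.inr ⟨w, h2, h3.symm⟩))

lemma isMax_eq {B D E : Finset V} (h1 : IsMaxConnComp G B D) (h2 : IsMaxConnComp G B E)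
    (hne : (D ∩ E).Nonempty) : D = E := by
  have hc := conn_union h1.2.2.1 h2.2.2.1 hne
  have e1 := h1.2.2.2 (D ∪ E) Finset.subset_union_left (Finset.union_subset h1.1 h2.1) hc
  have e2 := h2.2.2.2 (D ∪ E) Finset.subset_union_right (Finset.union_subset h1.1 h2.1) hc
  exact e1.symm.trans e2

lemma C_not_mem_mcc_sdiff {B C : Finset V} (hC : C.Nonempty) :
    C ∉ maxConnComps G (B \ C) := by
  intro h
  obtain ⟨v, hv⟩ := hC
  have := (mem_mcc.1 h).1 hv
  simp at this
  exact this.2 hv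

lemma mcc_insert {B C : Finset V} (hC : C.Nonempty) (hconn : Conn G C)
    (hCB : C ∈ maxConnComps G B) :
    maxConnComps G B = insert C (maxConnComps G (B \ C)) := by
  have hCmax := mem_mcc.1 hCB
  ext D
  simp only [Finset.mem_insert]
  constructor
  · intro hD
    have hDmax := mem_mcc.1 hD
    by_cases hDC : D = C
    · exact Or.inl hDC
    · have hdisj : ∀ y, y ∈ D → y ∉ C := by
        intro y hyD hyC
        exact hDC (isMax_eq hDmax hCmax ⟨y, Finset.mem_inter.2 ⟨hyD, hyC⟩⟩)
      refine Or.inr (mem_mcc.2 ⟨fun x hx => Finset.mem_sdiff.2 ⟨hDmax.1 hx, hdisj x hx⟩,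
        hDmax.2.1, hDmax.2.2.1, fun C'' h1 h2 h3 =>
          hDmax.2.2.2 C'' h1 (h2.trans (Finset.sdiff_subset)) h3⟩)
  · rintro (rfl | hD)
    · exact hCB
    · have hDmax := mem_mcc.1 hD
      refine mem_mcc.2 ⟨hDmax.1.trans Finset.sdiff_subset, hDmax.2.1, hDmax.2.2.1,
        fun C'' h1 h2 h3 => ?_⟩
      have hsub : C'' ⊆ B \ C := by
        intro x hx
        refine Finset.mem_sdiff.2 ⟨h2 hx, fun hxC => ?_⟩
        have hcu : Conn G (C'' ∪ C) := conn_union h3 hconn ⟨x, Finset.mem_inter.2 ⟨hx, hxC⟩⟩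
        have := hCmax.2.2.2 (C'' ∪ C) Finset.subset_union_right
          (Finset.union_subset h2 hCmax.1) hcu
        have hC''C : C'' ⊆ C := by rw [← this]; exact Finset.subset_union_left
        obtain ⟨v, hv⟩ := hDmax.2.1
        have := Finset.mem_sdiff.1 (hDmax.1 hv)
        exact this.2 (hC''C (h1 hv))
      exact hDmax.2.2.2 C'' h1 hsub h3

lemma card_split {A B C : Finset V} (hCB : C ⊆ B) :
    (B \ A).card = (C \ A).card + ((B \ C) \ (A \ C)).card := by
  rw [← Finset.card_union_of_disjoint]
  · congr 1
    ext x
    simp only [Finset.mem_sdiff, Finset.mem_union]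
    have := @hCB x
    tauto
  · rw [Finset.disjoint_left]
    intro x hx hx2
    simp only [Finset.mem_sdiff] at hx hx2
    exact hx2.1.2 hx.1

end Aux

/-- Lemma (derivative): for a nonempty connected set `C` with
`spo(C) ∩ (A∖C) = ∅`, the partial derivative of `p_A^V` with respect to `q_C` is
`(−1)^{|C∖A|} p_{A∖C}^{V∖spo(C)}`; if `spo(C) ∩ (A∖C) ≠ ∅` it is `0`. -/
theorem stmt14 (G : SimpleGraph V) [DecidableRel G.Adj] (A C : Finset V)
    (hC : C.Nonempty) (hconn : Conn G C) (q : Finset V → ℝ) :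
    (spo G C ∩ (A \ C) = ∅ →
      HasDerivAt (fun s : ℝ => pPoly G A Finset.univ (Function.update q C s))
        ((-1 : ℝ) ^ (C \ A).card * pPoly G (A \ C) (Finset.univ \ spo G C) q)
        (q C)) ∧
    (spo G C ∩ (A \ C) ≠ ∅ →
      HasDerivAt (fun s : ℝ => pPoly G A Finset.univ (Function.update q C s))
        0 (q C)) := by
  classical
  set T : Finset (Finset V) :=
    Finset.univ.filter (fun B : Finset V => A ⊆ B ∧ B ⊆ Finset.univ) with hT
  set S : Finset (Finset V) := T.filter (fun B => C ∈ maxConnComps G B) with hSdef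
  have hS : ∀ B, B ∈ S ↔ A ⊆ B ∧ C ∈ maxConnComps G B := by
    intro B; simp [hSdef, hT, Finset.mem_filter]
  have hderiv : HasDerivAt (fun s : ℝ => pPoly G A Finset.univ (Function.update q C s))
      (∑ B ∈ T, if C ∈ maxConnComps G B then
        (-1 : ℝ) ^ (B \ A).card * ∏ C' ∈ (maxConnComps G B).erase C, q C' else 0)
      (q C) := by
    simp only [pPoly]
    apply HasDerivAt.fun_sum
    intro B hB
    by_cases hmem : C ∈ maxConnComps G B
    · have hprod : ∀ s : ℝ,
          (-1 : ℝ) ^ (B \ A).card * ∏ C' ∈ maxConnComps G B, Function.update q C s C'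
            = s * ((-1 : ℝ) ^ (B \ A).card * ∏ C' ∈ (maxConnComps G B).erase C, q C') := by
        intro s
        rw [← Finset.mul_prod_erase _ _ hmem, Function.update_self,
          Finset.prod_congr rfl
            (fun x hx => Function.update_of_ne (Finset.ne_of_mem_erase hx) _ _)]
        ring
      simp only [hprod, if_pos hmem]
      exact hasDerivAt_mul_const _
    · have hprod : ∀ s : ℝ,
          (-1 : ℝ) ^ (B \ A).card * ∏ C' ∈ maxConnComps G B, Function.update q C s C'
            = (-1 : ℝ) ^ (B \ A).card * ∏ C' ∈ maxConnComps G B, q C' := by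
        intro s
        congr 1
        exact Finset.prod_congr rfl
          (fun x hx => Function.update_of_ne (fun h => hmem (by rw [← h]; exact hx)) _ _)
      simp only [hprod, if_neg hmem]
      exact hasDerivAt_const _ _
  have hsum : (∑ B ∈ T, if C ∈ maxConnComps G B then
        (-1 : ℝ) ^ (B \ A).card * ∏ C' ∈ (maxConnComps G B).erase C, q C' else 0)
      = ∑ B ∈ S, (-1 : ℝ) ^ (B \ A).card * ∏ C' ∈ (maxConnComps G B).erase C, q C' :=
    (Finset.sum_filter _ _).symm
  rw [hsum] at hderiv
  constructor
  · intro hempty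
    have key : (∑ B ∈ S, (-1 : ℝ) ^ (B \ A).card * ∏ C' ∈ (maxConnComps G B).erase C, q C')
        = (-1 : ℝ) ^ (C \ A).card * pPoly G (A \ C) (Finset.univ \ spo G C) q := by
      rw [pPoly, Finset.mul_sum]
      refine Finset.sum_bij' (fun B _ => B \ C) (fun B' _ => B' ∪ C) ?_ ?_ ?_ ?_ ?_
      · intro B hB
        obtain ⟨hAB, hmem⟩ := (hS B).1 hB
        obtain ⟨hCB, hbd⟩ := (mcc_char hC hconn).1 hmem
        simp only [Finset.mem_filter, Finset.mem_univ, true_and]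
        constructor
        · intro x hx
          rw [Finset.mem_sdiff] at hx ⊢
          exact ⟨hAB hx.1, hx.2⟩
        · intro x hx
          rw [Finset.mem_sdiff] at hx ⊢
          exact ⟨Finset.mem_univ x, hbd x hx.1 hx.2⟩
      · intro B' hB'
        simp only [Finset.mem_filter, Finset.mem_univ, true_and] at hB'
        obtain ⟨hA', hsub⟩ := hB'
        rw [hS]
        constructor
        · intro x hx
          by_cases hxC : x ∈ C
          · exact Finset.mem_union.2 (Or.inr hxC)
          · exact Finset.mem_union.2 (Or.inl (hA' (Finset.mem_sdiff.2 ⟨hx, hxC⟩)))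
        · refine (mcc_char hC hconn).2 ⟨Finset.subset_union_right, fun x hx hxC => ?_⟩
          rcases Finset.mem_union.1 hx with hx' | hx'
          · exact (Finset.mem_sdiff.1 (hsub hx')).2
          · exact absurd hx' hxC
      · intro B hB
        obtain ⟨hAB, hmem⟩ := (hS B).1 hB
        exact Finset.sdiff_union_of_subset (mem_mcc.1 hmem).1
      · intro B' hB'
        simp only [Finset.mem_filter, Finset.mem_univ, true_and] at hB'
        have hdisj : ∀ x ∈ B', x ∉ C := fun x hx hxC =>
          (Finset.mem_sdiff.1 (hB'.2 hx)).2 (subset_spo hxC)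
        ext x
        simp only [Finset.mem_sdiff, Finset.mem_union]
        have := hdisj x
        tauto
      · intro B hB
        obtain ⟨hAB, hmem⟩ := (hS B).1 hB
        have he : (maxConnComps G B).erase C = maxConnComps G (B \ C) := by
          rw [mcc_insert hC hconn hmem, Finset.erase_insert (C_not_mem_mcc_sdiff hC)]
        rw [he, card_split (mem_mcc.1 hmem).1, pow_add]
        ring
    rwa [key] at hderiv
  · intro hne
    have hSempty : S = ∅ := by
      rw [Finset.eq_empty_iff_forall_notMem]
      intro B hB
      obtain ⟨hAB, hmem⟩ := (hS B).1 hB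
      obtain ⟨hCB, hbd⟩ := (mcc_char hC hconn).1 hmem
      obtain ⟨x, hx⟩ := Finset.nonempty_iff_ne_empty.2 hne
      rw [Finset.mem_inter, Finset.mem_sdiff] at hx
      exact hbd x (hAB hx.2.1) hx.2.2 hx.1
    rw [hSempty, Finset.sum_empty] at hderiv
    exact hderiv


end BMMI
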